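/- arXiv:2011.14456 — 2 statements merged into one kernel-verified Lean document; each statement's English description precedes it below -/
import Mathlib

section
/- If ρ : Ω → ℝ is C² smooth, positive, and log ρ is subharmonic on an open set Ω ⊆ ℂ, then log(1 + ρ) is subharmonic on Ω. -/
/-- The Laplacian of `f : ℂ → ℝ`, computed as the sum of second directional
derivatives in the directions `1` and `I`. -/
noncomputable def lap (f : ℂ → ℝ) (z : ℂ) : ℝ :=
  fderiv ℝ (fun w => fderiv ℝ f w 1) z 1 +
    fderiv ℝ (fun w => fderiv ℝ f w Complex.I) z Complex.I

lemma second_dir_log (f : ℂ → ℝ) {s : Set ℂ} (hs : IsOpen s) (hf : ContDiffOn ℝ 2 f s)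
    (hf0 : ∀ z ∈ s, 0 < f z) {z : ℂ} (hz : z ∈ s) (e : ℂ) :
    fderiv ℝ (fun w => fderiv ℝ (fun u => Real.log (f u)) w e) z e
      = fderiv ℝ (fun w => fderiv ℝ f w e) z e / f z - (fderiv ℝ f z e)^2 / (f z)^2 := by
  have hmem := hs.mem_nhds hz
  have hdiff : ∀ w ∈ s, DifferentiableAt ℝ f w := fun w hw =>
    (hf.contDiffAt (hs.mem_nhds hw)).differentiableAt (by norm_num)
  have heq : (fun w => fderiv ℝ (fun u => Real.log (f u)) w e)
      =ᶠ[nhds z] (fun w => (f w)⁻¹ * fderiv ℝ f w e) := by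
    filter_upwards [hmem] with w hw
    rw [((hdiff w hw).hasFDerivAt.log (hf0 w hw).ne').fderiv]
    simp
  rw [show fderiv ℝ (fun w => fderiv ℝ (fun u => Real.log (f u)) w e) z
      = fderiv ℝ (fun w => (f w)⁻¹ * fderiv ℝ f w e) z from heq.fderiv_eq]
  have hC1 : ContDiffAt ℝ 1 (fderiv ℝ f) z :=
    (hf.contDiffAt hmem).fderiv_right (by norm_num)
  have hge : DifferentiableAt ℝ (fun w => fderiv ℝ f w e) z :=
    (hC1.differentiableAt one_ne_zero).clm_apply (differentiableAt_const e)
  have hinv : HasFDerivAt (fun w => (f w)⁻¹) (-(f z ^ 2)⁻¹ • fderiv ℝ f z) z :=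
    (hasDerivAt_inv (hf0 z hz).ne').comp_hasFDerivAt z (hdiff z hz).hasFDerivAt
  have hmul : HasFDerivAt (fun w => (f w)⁻¹ * fderiv ℝ f w e) _ z := hinv.mul hge.hasFDerivAt
  rw [hmul.fderiv]
  have h0 : f z ≠ 0 := (hf0 z hz).ne'
  simp [ContinuousLinearMap.add_apply, ContinuousLinearMap.smul_apply, smul_eq_mul]
  field_simp
  ring

lemma lap_log (f : ℂ → ℝ) {s : Set ℂ} (hs : IsOpen s) (hf : ContDiffOn ℝ 2 f s)
    (hf0 : ∀ z ∈ s, 0 < f z) {z : ℂ} (hz : z ∈ s) :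
    lap (fun w => Real.log (f w)) z
      = lap f z / f z - ((fderiv ℝ f z 1)^2 + (fderiv ℝ f z Complex.I)^2) / (f z)^2 := by
  unfold lap
  rw [second_dir_log f hs hf hf0 hz 1, second_dir_log f hs hf hf0 hz Complex.I]
  ring


/-- If `ρ` is `C²`, positive, and `log ρ` is subharmonic (`Δ log ρ ≥ 0`) on an open
set `Ω ⊆ ℂ`, then `log (1 + ρ)` is subharmonic on `Ω`. -/
theorem stmt_0 (Ω : Set ℂ) (hΩ : IsOpen Ω) (ρ : ℂ → ℝ)
    (hC2 : ContDiffOn ℝ 2 ρ Ω) (hpos : ∀ z ∈ Ω, 0 < ρ z)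
    (hsub : ∀ z ∈ Ω, 0 ≤ lap (fun w => Real.log (ρ w)) z) :
    ∀ z ∈ Ω, 0 ≤ lap (fun w => Real.log (1 + ρ w)) z := by
  intro z hz
  have hC2' : ContDiffOn ℝ 2 (fun w => 1 + ρ w) Ω := contDiffOn_const.add hC2
  have hpos' : ∀ w ∈ Ω, 0 < 1 + ρ w := fun w hw => by linarith [hpos w hw]
  have hfd : ∀ w, fderiv ℝ (fun u => 1 + ρ u) w = fderiv ℝ ρ w := fun w =>
    fderiv_const_add 1
  have hlap : lap (fun w => 1 + ρ w) z = lap ρ z := by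
    unfold lap; simp only [hfd]
  have h1 := lap_log ρ hΩ hC2 hpos hz
  have h2 := lap_log (fun w => 1 + ρ w) hΩ hC2' hpos' hz
  simp only [hfd, hlap] at h2
  rw [h2]
  have hs := hsub z hz
  rw [h1] at hs
  have hρ := hpos z hz
  set L := lap ρ z
  set a := fderiv ℝ ρ z 1
  set b := fderiv ℝ ρ z Complex.I
  have hQ : 0 ≤ a^2 + b^2 := by positivity
  have key : (a^2 + b^2) / ρ z ≤ L := by
    have hs' : (a^2 + b^2) / ρ z^2 ≤ L / ρ z := by linarith
    rw [div_le_div_iff₀ (by positivity) hρ] at hs'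
    rw [div_le_iff₀ hρ]
    nlinarith
  have h1ρ : 0 < 1 + ρ z := by linarith
  rw [sub_nonneg, div_le_div_iff₀ (by positivity) h1ρ]
  calc (a^2+b^2) * (1 + ρ z) ≤ ((a^2+b^2)/ρ z) * (1 + ρ z)^2 := by
        rw [div_mul_eq_mul_div, le_div_iff₀ hρ]; nlinarith
    _ ≤ L * (1 + ρ z)^2 := by nlinarith
end

section
/- If ρ : Ω → ℝ is C² smooth, positive, and log ρ is subharmonic on an open set Ω ⊆ ℂ, then for every ε > 0 the function log(1 + ε·ρ) is subharmonic on Ω. -/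
lemma fderiv_log_comp (f : ℂ → ℝ) (w : ℂ) (hd : DifferentiableAt ℝ f w) (hw : 0 < f w) :
    fderiv ℝ (fun x => Real.log (f x)) w = (f w)⁻¹ • fderiv ℝ f w :=
  ((Real.hasDerivAt_log hw.ne').comp_hasFDerivAt w hd.hasFDerivAt).fderiv

lemma second_deriv_log (f : ℂ → ℝ) (z v : ℂ) (hf : ContDiffAt ℝ 2 f z)
    (hpos : ∀ᶠ w in nhds z, 0 < f w) :
    fderiv ℝ (fun w => fderiv ℝ (fun x => Real.log (f x)) w v) z v
      = (f z * fderiv ℝ (fun w => fderiv ℝ f w v) z v - (fderiv ℝ f z v) ^ 2) / (f z) ^ 2 := by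
  have hdiff : ∀ᶠ w in nhds z, DifferentiableAt ℝ f w :=
    (hf.eventually (by norm_num)).mono fun w hw => hw.differentiableAt (by norm_num)
  have hz : 0 < f z := hpos.self_of_nhds
  have hdz : DifferentiableAt ℝ f z := hf.differentiableAt (by norm_num)
  have hC1 : ContDiffAt ℝ 1 (fderiv ℝ f) z := hf.fderiv_right (by norm_num)
  have hg : DifferentiableAt ℝ (fun w => fderiv ℝ f w v) z :=
    (hC1.differentiableAt one_ne_zero).clm_apply (differentiableAt_const v)
  have heq : (fun w => fderiv ℝ (fun x => Real.log (f x)) w v)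
      =ᶠ[nhds z] fun w => (f w)⁻¹ * fderiv ℝ f w v := by
    filter_upwards [hdiff, hpos] with w hdw hw
    rw [fderiv_log_comp f w hdw hw]; rfl
  rw [Filter.EventuallyEq.fderiv_eq heq]
  have hinv : HasFDerivAt (fun w => (f w)⁻¹) ((-(f z ^ 2)⁻¹) • fderiv ℝ f z) z :=
    (hasDerivAt_inv hz.ne').comp_hasFDerivAt z hdz.hasFDerivAt
  have hmul : HasFDerivAt (fun w => (f w)⁻¹ * fderiv ℝ f w v) _ z := hinv.mul hg.hasFDerivAt
  rw [hmul.fderiv]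
  simp only [ContinuousLinearMap.add_apply, ContinuousLinearMap.smul_apply, smul_eq_mul]
  field_simp
  ring

lemma second_deriv_affine (ρ : ℂ → ℝ) (ε : ℝ) (z v : ℂ) (hf : ContDiffAt ℝ 2 ρ z) :
    fderiv ℝ (fun w => fderiv ℝ (fun x => 1 + ε * ρ x) w v) z v
      = ε * fderiv ℝ (fun w => fderiv ℝ ρ w v) z v := by
  have hdiff : ∀ᶠ w in nhds z, DifferentiableAt ℝ ρ w :=
    (hf.eventually (by norm_num)).mono fun w hw => hw.differentiableAt (by norm_num)
  have heq : (fun w => fderiv ℝ (fun x => 1 + ε * ρ x) w v)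
      =ᶠ[nhds z] fun w => ε * fderiv ℝ ρ w v := by
    filter_upwards [hdiff] with w hdw
    rw [fderiv_const_add, fderiv_const_mul hdw]
    simp
  rw [Filter.EventuallyEq.fderiv_eq heq]
  have hC1 : ContDiffAt ℝ 1 (fderiv ℝ ρ) z := hf.fderiv_right (by norm_num)
  have hg : DifferentiableAt ℝ (fun w => fderiv ℝ ρ w v) z :=
    (hC1.differentiableAt one_ne_zero).clm_apply (differentiableAt_const v)
  rw [fderiv_const_mul hg]
  simp

lemma first_deriv_affine (ρ : ℂ → ℝ) (ε : ℝ) (z v : ℂ) (hd : DifferentiableAt ℝ ρ z) :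
    fderiv ℝ (fun x => 1 + ε * ρ x) z v = ε * fderiv ℝ ρ z v := by
  rw [fderiv_const_add, fderiv_const_mul hd]
  simp

/-- If `ρ` is `C²`, positive, and `log ρ` is subharmonic on an open `Ω ⊆ ℂ`, then
for every `ε > 0` the function `log (1 + ε·ρ)` is subharmonic on `Ω`. -/
theorem stmt_1 (Ω : Set ℂ) (hΩ : IsOpen Ω) (ρ : ℂ → ℝ)
    (hC2 : ContDiffOn ℝ 2 ρ Ω) (hpos : ∀ z ∈ Ω, 0 < ρ z)
    (hsub : ∀ z ∈ Ω, 0 ≤ lap (fun w => Real.log (ρ w)) z) :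
    ∀ ε > (0:ℝ), ∀ z ∈ Ω, 0 ≤ lap (fun w => Real.log (1 + ε * ρ w)) z := by
  intro ε hε z hz
  have hmem : Ω ∈ nhds z := hΩ.mem_nhds hz
  have hC2at : ContDiffAt ℝ 2 ρ z := hC2.contDiffAt hmem
  have hρpos : ∀ᶠ w in nhds z, 0 < ρ w :=
    Filter.eventually_of_mem hmem fun w hw => hpos w hw
  have hzpos : 0 < ρ z := hpos z hz
  have hdz : DifferentiableAt ℝ ρ z := hC2at.differentiableAt (by norm_num)
  set A₁ := fderiv ℝ (fun w => fderiv ℝ ρ w 1) z 1 with hA1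
  set AI := fderiv ℝ (fun w => fderiv ℝ ρ w Complex.I) z Complex.I with hAI
  set B₁ := fderiv ℝ ρ z 1 with hB1
  set BI := fderiv ℝ ρ z Complex.I with hBI
  -- the hypothesis
  have hs := hsub z hz
  unfold lap at hs
  rw [second_deriv_log ρ z 1 hC2at hρpos, second_deriv_log ρ z Complex.I hC2at hρpos] at hs
  -- the goal
  have hgC2 : ContDiffAt ℝ 2 (fun x => 1 + ε * ρ x) z :=
    contDiffAt_const.add (contDiffAt_const.mul hC2at)
  have hgpos : ∀ᶠ w in nhds z, 0 < 1 + ε * ρ w := by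
    filter_upwards [hρpos] with w hw
    nlinarith
  unfold lap
  rw [second_deriv_log _ z 1 hgC2 hgpos, second_deriv_log _ z Complex.I hgC2 hgpos,
    second_deriv_affine ρ ε z 1 hC2at, second_deriv_affine ρ ε z Complex.I hC2at,
    first_deriv_affine ρ ε z 1 hdz, first_deriv_affine ρ ε z Complex.I hdz]
  have hgz : (0:ℝ) < 1 + ε * ρ z := by nlinarith
  rw [← add_div] at hs ⊢
  rw [le_div_iff₀ (by positivity)] at hs ⊢
  rw [zero_mul] at hs ⊢
  nlinarith [sq_nonneg B₁, sq_nonneg BI, mul_pos hε hzpos,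
    mul_nonneg (mul_nonneg hε.le hzpos.le) hs]
end
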